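/- Let (X, μ), (Y, ν), (Z, ρ) be σ-finite measure spaces, let k₁ ∈ L²(X × Y, μ × ν) and k₂ ∈ L²(Y × Z, ν × ρ), and let T₁ : L²(X, μ) → L²(Y, ν) and T₂ : L²(Y, ν) → L²(Z, ρ) be the corresponding integral operators. Then the function k(x, z) = ∫_Y k₁(x, y) k₂(y, z) dν(y) is defined (μ × ρ)-almost everywhere, belongs to L²(X × Z, μ × ρ) with ‖k‖_{L²(μ×ρ)} ≤ ‖k₁‖_{L²(μ×ν)} · ‖k₂‖_{L²(ν×ρ)}, and the integral operator T_k with kernel k equals the composition T₂ ∘ T₁. -/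

import Mathlib

open MeasureTheory Filter
open scoped ENNReal

private lemma l2_mul_integrable' {W : Type*} [MeasurableSpace W] {m : Measure W}
    {u v : W → ℝ} (hu : MemLp u 2 m) (hv : MemLp v 2 m) :
    Integrable (fun w => u w * v w) m := by
  haveI : ENNReal.HolderTriple 2 2 1 := ⟨by rw [ENNReal.inv_two_add_inv_two, inv_one]⟩
  have h : MemLp (u • v) 1 m := hv.smul hu
  exact memLp_one_iff_integrable.mp h

private lemma memL2_prod' {α β : Type*} [MeasurableSpace α] [MeasurableSpace β]
    {m₁ : Measure α} {m₂ : Measure β} [SFinite m₁] [SFinite m₂]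
    {u : α → ℝ} {v : β → ℝ} (hu : MemLp u 2 m₁) (hv : MemLp v 2 m₂) :
    MemLp (fun q : α × β => u q.1 * v q.2) 2 (m₁.prod m₂) := by
  have hm : AEStronglyMeasurable (fun q : α × β => u q.1 * v q.2) (m₁.prod m₂) :=
    (hu.1.comp_quasiMeasurePreserving Measure.quasiMeasurePreserving_fst).mul
      (hv.1.comp_quasiMeasurePreserving Measure.quasiMeasurePreserving_snd)
  rw [memLp_two_iff_integrable_sq hm]
  have h := hu.integrable_sq.mul_prod hv.integrable_sq
  exact h.congr (Eventually.of_forall fun q => by simp [mul_pow])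

/-- Composition of Hilbert–Schmidt integral operators: if `k₁ ∈ L²(X×Y)`, `k₂ ∈ L²(Y×Z)`
with corresponding integral operators `T₁ : L²(X) → L²(Y)` and `T₂ : L²(Y) → L²(Z)`, then
the convolution kernel `k(x,z) = ∫_Y k₁(x,y) k₂(y,z) dν(y)` is defined (μ×ρ)-a.e.,
belongs to `L²(X×Z, μ×ρ)` with `‖k‖₂ ≤ ‖k₁‖₂ ‖k₂‖₂`, and the integral operator with
kernel `k` equals the composition `T₂ ∘ T₁`. -/
theorem composition_of_integral_operators {X Y Z : Type*}
    [MeasurableSpace X] [MeasurableSpace Y] [MeasurableSpace Z]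
    (μ : Measure X) (ν : Measure Y) (ρ : Measure Z)
    [SigmaFinite μ] [SigmaFinite ν] [SigmaFinite ρ]
    (k₁ : X × Y → ℝ) (hk₁ : MemLp k₁ 2 (μ.prod ν))
    (k₂ : Y × Z → ℝ) (hk₂ : MemLp k₂ 2 (ν.prod ρ))
    (T₁ : Lp ℝ 2 μ →L[ℝ] Lp ℝ 2 ν)
    (hT₁ : ∀ f : Lp ℝ 2 μ,
      (T₁ f : Y → ℝ) =ᵐ[ν] fun y => ∫ x, k₁ (x, y) * f x ∂μ)
    (T₂ : Lp ℝ 2 ν →L[ℝ] Lp ℝ 2 ρ)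
    (hT₂ : ∀ g : Lp ℝ 2 ν,
      (T₂ g : Z → ℝ) =ᵐ[ρ] fun z => ∫ y, k₂ (y, z) * g y ∂ν) :
    (∀ᵐ p ∂(μ.prod ρ), Integrable (fun y => k₁ (p.1, y) * k₂ (y, p.2)) ν) ∧
    MemLp (fun p : X × Z => ∫ y, k₁ (p.1, y) * k₂ (y, p.2) ∂ν) 2 (μ.prod ρ) ∧
    eLpNorm (fun p : X × Z => ∫ y, k₁ (p.1, y) * k₂ (y, p.2) ∂ν) 2 (μ.prod ρ)
      ≤ eLpNorm k₁ 2 (μ.prod ν) * eLpNorm k₂ 2 (ν.prod ρ) ∧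
    (∀ f : Lp ℝ 2 μ,
      (T₂ (T₁ f) : Z → ℝ) =ᵐ[ρ]
        fun z => ∫ x, (∫ y, k₁ (x, y) * k₂ (y, z) ∂ν) * f x ∂μ) := by
  -- a.e. sections are in L²
  have hsq₁ : Integrable (fun p => ‖k₁ p‖ ^ 2) (μ.prod ν) :=
    (memLp_two_iff_integrable_sq_norm hk₁.1).mp hk₁
  have hsq₂ : Integrable (fun p => ‖k₂ p‖ ^ 2) (ν.prod ρ) :=
    (memLp_two_iff_integrable_sq_norm hk₂.1).mp hk₂
  have hsec₁ : ∀ᵐ x ∂μ, MemLp (fun y => k₁ (x, y)) 2 ν := by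
    filter_upwards [hk₁.1.prodMk_left, hsq₁.prod_right_ae] with x hx hix
    exact (memLp_two_iff_integrable_sq_norm hx).mpr hix
  have hsec₂ : ∀ᵐ z ∂ρ, MemLp (fun y => k₂ (y, z)) 2 ν := by
    have hm : AEStronglyMeasurable (fun q : Z × Y => k₂ (q.2, q.1)) (ρ.prod ν) :=
      hk₂.1.prod_swap
    filter_upwards [hm.prodMk_left, hsq₂.prod_left_ae] with z hz hiz
    exact (memLp_two_iff_integrable_sq_norm hz).mpr hiz
  have hsec₁' : ∀ᵐ p ∂μ.prod ρ, MemLp (fun y => k₁ (p.1, y)) 2 ν :=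
    Measure.quasiMeasurePreserving_fst.ae hsec₁
  have hsec₂' : ∀ᵐ p ∂μ.prod ρ, MemLp (fun y => k₂ (y, p.2)) 2 ν :=
    Measure.quasiMeasurePreserving_snd.ae hsec₂
  -- part 1
  have part1 : ∀ᵐ p ∂μ.prod ρ, Integrable (fun y => k₁ (p.1, y) * k₂ (y, p.2)) ν := by
    filter_upwards [hsec₁', hsec₂'] with p h1 h2 using l2_mul_integrable' h1 h2
  -- measurable representatives and a.e.-measurability of the kernel
  set g₁ : X × Y → ℝ := hk₁.1.mk k₁ with hg₁def
  have sg₁ : StronglyMeasurable g₁ := hk₁.1.stronglyMeasurable_mk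
  set g₂ : Y × Z → ℝ := hk₂.1.mk k₂ with hg₂def
  have sg₂ : StronglyMeasurable g₂ := hk₂.1.stronglyMeasurable_mk
  have he₁ : ∀ᵐ x ∂μ, (fun y => k₁ (x, y)) =ᵐ[ν] fun y => g₁ (x, y) :=
    Measure.ae_ae_of_ae_prod hk₁.1.ae_eq_mk
  have he₂ : ∀ᵐ z ∂ρ, (fun y => k₂ (y, z)) =ᵐ[ν] fun y => g₂ (y, z) := by
    have h' : (fun q : Z × Y => k₂ (q.2, q.1)) =ᵐ[ρ.prod ν] fun q => g₂ (q.2, q.1) :=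
      (Measure.measurePreserving_swap
        (μ := ρ) (ν := ν)).quasiMeasurePreserving.ae_eq hk₂.1.ae_eq_mk
    exact Measure.ae_ae_of_ae_prod h'
  have he₁' : ∀ᵐ p ∂μ.prod ρ, (fun y => k₁ (p.1, y)) =ᵐ[ν] fun y => g₁ (p.1, y) :=
    Measure.quasiMeasurePreserving_fst.ae he₁
  have he₂' : ∀ᵐ p ∂μ.prod ρ, (fun y => k₂ (y, p.2)) =ᵐ[ν] fun y => g₂ (y, p.2) :=
    Measure.quasiMeasurePreserving_snd.ae he₂
  have hKg : (fun p : X × Z => ∫ y, k₁ (p.1, y) * k₂ (y, p.2) ∂ν)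
      =ᵐ[μ.prod ρ] fun p => ∫ y, g₁ (p.1, y) * g₂ (y, p.2) ∂ν := by
    filter_upwards [he₁', he₂'] with p h1 h2
    exact integral_congr_ae (h1.mul h2)
  have sK' : StronglyMeasurable (fun p : X × Z => ∫ y, g₁ (p.1, y) * g₂ (y, p.2) ∂ν) := by
    have : StronglyMeasurable (fun q : (X × Z) × Y => g₁ (q.1.1, q.2) * g₂ (q.2, q.1.2)) :=
      (sg₁.comp_measurable ((measurable_fst.fst).prodMk measurable_snd)).mul
        (sg₂.comp_measurable (measurable_snd.prodMk (measurable_fst.snd)))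
    exact this.integral_prod_right'
  have hKm : AEStronglyMeasurable
      (fun p : X × Z => ∫ y, k₁ (p.1, y) * k₂ (y, p.2) ∂ν) (μ.prod ρ) :=
    ⟨_, sK', hKg⟩
  -- the pointwise Cauchy–Schwarz bound
  set A : X → ℝ≥0∞ := fun x => ∫⁻ y, (‖k₁ (x, y)‖₊ : ℝ≥0∞) ^ (2 : ℝ) ∂ν with hAdef
  set B : Z → ℝ≥0∞ := fun z => ∫⁻ y, (‖k₂ (y, z)‖₊ : ℝ≥0∞) ^ (2 : ℝ) ∂ν with hBdef
  have hCS : ∀ᵐ p ∂μ.prod ρ,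
      (‖∫ y, k₁ (p.1, y) * k₂ (y, p.2) ∂ν‖₊ : ℝ≥0∞) ^ (2 : ℝ) ≤ A p.1 * B p.2 := by
    filter_upwards [hsec₁', hsec₂'] with p h1 h2
    have step1 : (‖∫ y, k₁ (p.1, y) * k₂ (y, p.2) ∂ν‖₊ : ℝ≥0∞)
        ≤ ∫⁻ y, (‖k₁ (p.1, y) * k₂ (y, p.2)‖₊ : ℝ≥0∞) ∂ν :=
      enorm_integral_le_lintegral_enorm _
    have step2 : ∫⁻ y, (‖k₁ (p.1, y) * k₂ (y, p.2)‖₊ : ℝ≥0∞) ∂ν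
        ≤ (A p.1) ^ (1 / 2 : ℝ) * (B p.2) ^ (1 / 2 : ℝ) := by
      have hc : (2 : ℝ).HolderConjugate 2 := Real.holderConjugate_iff.mpr ⟨one_lt_two, by norm_num⟩
      have h := ENNReal.lintegral_mul_le_Lp_mul_Lq ν hc h1.1.aemeasurable.enorm h2.1.aemeasurable.enorm
      simp only [Pi.mul_apply] at h
      simp only [nnnorm_mul, ENNReal.coe_mul]
      exact h
    calc (‖∫ y, k₁ (p.1, y) * k₂ (y, p.2) ∂ν‖₊ : ℝ≥0∞) ^ (2 : ℝ)
        ≤ ((A p.1) ^ (1 / 2 : ℝ) * (B p.2) ^ (1 / 2 : ℝ)) ^ (2 : ℝ) :=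
          ENNReal.rpow_le_rpow (step1.trans step2) (by norm_num)
      _ = A p.1 * B p.2 := by
          rw [ENNReal.mul_rpow_of_nonneg _ _ (by norm_num : (0:ℝ) ≤ 2),
            ← ENNReal.rpow_mul, ← ENNReal.rpow_mul]
          norm_num
  -- measurability of A and B
  have hAmeas : AEMeasurable A μ := by
    refine ⟨fun x => ∫⁻ y, (‖g₁ (x, y)‖₊ : ℝ≥0∞) ^ (2 : ℝ) ∂ν, ?_, ?_⟩
    · exact Measurable.lintegral_prod_right' (sg₁.measurable.enorm.pow_const _)
    · filter_upwards [he₁] with x hx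
      exact lintegral_congr_ae (hx.mono fun y hy =>
        congrArg (fun t : ℝ => (‖t‖₊ : ℝ≥0∞) ^ (2 : ℝ)) hy)
  have hBmeas : AEMeasurable B ρ := by
    refine ⟨fun z => ∫⁻ y, (‖g₂ (y, z)‖₊ : ℝ≥0∞) ^ (2 : ℝ) ∂ν, ?_, ?_⟩
    · exact Measurable.lintegral_prod_left' (sg₂.measurable.enorm.pow_const _)
    · filter_upwards [he₂] with z hz
      exact lintegral_congr_ae (hz.mono fun y hy =>
        congrArg (fun t : ℝ => (‖t‖₊ : ℝ≥0∞) ^ (2 : ℝ)) hy)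
  -- the eLpNorm bound
  have ht : (2 : ℝ≥0∞).toReal = (2 : ℝ) := by norm_num
  have hhalf : (1 / (2:ℝ)) * 2 = 1 := by norm_num
  have hNA : ∫⁻ x, A x ∂μ = eLpNorm k₁ 2 (μ.prod ν) ^ (2 : ℝ) := by
    rw [eLpNorm_eq_lintegral_rpow_enorm_toReal (by norm_num) (by norm_num), ht,
      ← ENNReal.rpow_mul, hhalf, ENNReal.rpow_one]
    exact (lintegral_prod _ (hk₁.1.aemeasurable.enorm.pow_const (2:ℝ))).symm
  have hNB : ∫⁻ z, B z ∂ρ = eLpNorm k₂ 2 (ν.prod ρ) ^ (2 : ℝ) := by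
    rw [eLpNorm_eq_lintegral_rpow_enorm_toReal (by norm_num) (by norm_num), ht,
      ← ENNReal.rpow_mul, hhalf, ENNReal.rpow_one]
    exact (lintegral_prod_symm _ (hk₂.1.aemeasurable.enorm.pow_const (2:ℝ))).symm
  have hbound : ∫⁻ p, (‖∫ y, k₁ (p.1, y) * k₂ (y, p.2) ∂ν‖₊ : ℝ≥0∞) ^ (2 : ℝ) ∂μ.prod ρ
      ≤ eLpNorm k₁ 2 (μ.prod ν) ^ (2 : ℝ) * eLpNorm k₂ 2 (ν.prod ρ) ^ (2 : ℝ) := by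
    calc ∫⁻ p, (‖∫ y, k₁ (p.1, y) * k₂ (y, p.2) ∂ν‖₊ : ℝ≥0∞) ^ (2 : ℝ) ∂μ.prod ρ
        ≤ ∫⁻ p, A p.1 * B p.2 ∂μ.prod ρ := lintegral_mono_ae hCS
      _ = (∫⁻ x, A x ∂μ) * ∫⁻ z, B z ∂ρ := lintegral_prod_mul hAmeas hBmeas
      _ = _ := by rw [hNA, hNB]
  have hle : eLpNorm (fun p : X × Z => ∫ y, k₁ (p.1, y) * k₂ (y, p.2) ∂ν) 2 (μ.prod ρ)
      ≤ eLpNorm k₁ 2 (μ.prod ν) * eLpNorm k₂ 2 (ν.prod ρ) := by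
    rw [eLpNorm_eq_lintegral_rpow_enorm_toReal (by norm_num) (by norm_num), ht]
    calc (∫⁻ p, (‖∫ y, k₁ (p.1, y) * k₂ (y, p.2) ∂ν‖₊ : ℝ≥0∞) ^ (2:ℝ) ∂μ.prod ρ) ^ (1 / (2:ℝ))
        ≤ (eLpNorm k₁ 2 (μ.prod ν) ^ (2 : ℝ) * eLpNorm k₂ 2 (ν.prod ρ) ^ (2 : ℝ)) ^ (1 / (2:ℝ)) :=
          ENNReal.rpow_le_rpow hbound (by norm_num)
      _ = eLpNorm k₁ 2 (μ.prod ν) * eLpNorm k₂ 2 (ν.prod ρ) := by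
          rw [ENNReal.mul_rpow_of_nonneg _ _ (by norm_num : (0:ℝ) ≤ 1 / 2),
            ← ENNReal.rpow_mul, ← ENNReal.rpow_mul]
          norm_num
  have hmem : MemLp (fun p : X × Z => ∫ y, k₁ (p.1, y) * k₂ (y, p.2) ∂ν) 2 (μ.prod ρ) :=
    ⟨hKm, hle.trans_lt (ENNReal.mul_lt_top hk₁.2 hk₂.2)⟩
  refine ⟨part1, hmem, hle, ?_⟩
  -- part 4
  intro f
  have hf : MemLp (fun x => (f : X → ℝ) x) 2 μ := Lp.memLp f
  have hint : ∀ᵐ z ∂ρ, Integrable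
      (fun q : Y × X => k₂ (q.1, z) * (k₁ (q.2, q.1) * (f : X → ℝ) q.2)) (ν.prod μ) := by
    filter_upwards [hsec₂] with z hz
    have m1 : MemLp (k₁ ∘ Prod.swap) 2 (ν.prod μ) :=
      hk₁.comp_measurePreserving (Measure.measurePreserving_swap (μ := ν) (ν := μ))
    have m2 : MemLp (fun q : Y × X => k₂ (q.1, z) * (f : X → ℝ) q.2) 2 (ν.prod μ) :=
      memL2_prod' hz hf
    have h := l2_mul_integrable' m1 m2
    exact h.congr (Eventually.of_forall fun q => by
      show k₁ (q.2, q.1) * (k₂ (q.1, z) * (f : X → ℝ) q.2)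
        = k₂ (q.1, z) * (k₁ (q.2, q.1) * (f : X → ℝ) q.2)
      ring)
  filter_upwards [hT₂ (T₁ f), hint] with z hz hiz
  have e1 : ∫ y, k₂ (y, z) * (T₁ f : Y → ℝ) y ∂ν
      = ∫ y, k₂ (y, z) * ∫ x, k₁ (x, y) * (f : X → ℝ) x ∂μ ∂ν :=
    integral_congr_ae ((hT₁ f).mono fun y hy =>
      congrArg (fun t => k₂ (y, z) * t) hy)
  have e2 : ∫ y, k₂ (y, z) * ∫ x, k₁ (x, y) * (f : X → ℝ) x ∂μ ∂ν
      = ∫ y, ∫ x, k₂ (y, z) * (k₁ (x, y) * (f : X → ℝ) x) ∂μ ∂ν := by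
    refine integral_congr_ae (Eventually.of_forall fun y => ?_)
    show k₂ (y, z) * ∫ x, k₁ (x, y) * (f : X → ℝ) x ∂μ
      = ∫ x, k₂ (y, z) * (k₁ (x, y) * (f : X → ℝ) x) ∂μ
    rw [integral_const_mul]
  have e3 : ∫ y, ∫ x, k₂ (y, z) * (k₁ (x, y) * (f : X → ℝ) x) ∂μ ∂ν
      = ∫ x, ∫ y, k₂ (y, z) * (k₁ (x, y) * (f : X → ℝ) x) ∂ν ∂μ :=
    integral_integral_swap hiz
  have e4 : ∀ x, ∫ y, k₂ (y, z) * (k₁ (x, y) * (f : X → ℝ) x) ∂ν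
      = (∫ y, k₁ (x, y) * k₂ (y, z) ∂ν) * (f : X → ℝ) x := by
    intro x
    calc ∫ y, k₂ (y, z) * (k₁ (x, y) * (f : X → ℝ) x) ∂ν
        = ∫ y, (k₁ (x, y) * k₂ (y, z)) * (f : X → ℝ) x ∂ν :=
          integral_congr_ae (Eventually.of_forall fun y =>
            (mul_left_comm (k₂ (y, z)) (k₁ (x, y)) ((f : X → ℝ) x)).trans
              (mul_assoc (k₁ (x, y)) (k₂ (y, z)) ((f : X → ℝ) x)).symm)
      _ = _ := integral_mul_const _ _
  calc (T₂ (T₁ f) : Z → ℝ) z = ∫ y, k₂ (y, z) * (T₁ f : Y → ℝ) y ∂ν := hz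
    _ = ∫ y, k₂ (y, z) * ∫ x, k₁ (x, y) * (f : X → ℝ) x ∂μ ∂ν := e1
    _ = ∫ y, ∫ x, k₂ (y, z) * (k₁ (x, y) * (f : X → ℝ) x) ∂μ ∂ν := e2
    _ = ∫ x, ∫ y, k₂ (y, z) * (k₁ (x, y) * (f : X → ℝ) x) ∂ν ∂μ := e3
    _ = ∫ x, (∫ y, k₁ (x, y) * k₂ (y, z) ∂ν) * (f : X → ℝ) x ∂μ :=
      integral_congr_ae (Eventually.of_forall fun x => e4 x)
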